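/- Let Ω_1 ⊆ Ω be an ε-net in (Ω,ϱ), i.e. for every x ∈ Ω there exists z ∈ Ω_1 with ϱ(x,z) ≤ ε. Then for every t ≥ 0 and all x_1, …, x_t ∈ Ω whose Gram matrix G = [K(x_i,x_j)]_{i,j=1}^t is invertible (no condition when t = 0), one has sup_{z∈Ω_1} √(S_t(z)) ≥ w_K(t) − ε, where S_t(x) = K(x,x) − v(x)ᵀ G⁻¹ v(x), v(x) = (K(x_1,x),…,K(x_t,x))ᵀ, and S_0(x) = K(x,x). In particular, the values w_t produced by the greedy n-width algorithm run on Ω_1 satisfy w_t ≥ w_K(t) − ε for all t. -/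

import Mathlib

open MeasureTheory Filter
open scoped ENNReal

noncomputable section

/-- The Kolmogorov `n`-width of the image of `Ω` under `Φ` in the Hilbert space `H`. -/
def kolmWidth {E H : Type*} [NormedAddCommGroup H] [InnerProductSpace ℝ H]
    (Ω : Set E) (Φ : E → H) (n : ℕ) : ℝ :=
  ⨅ L : {L : Submodule ℝ H // ∃ s : Finset H, s.card ≤ n ∧ L = Submodule.span ℝ (s : Set H)},
    ⨆ x : Ω, Metric.infDist (Φ (x : E)) (L.1 : Set H)

/-- The Gram matrix `[K(x_i,x_j)]` of the points `x : Fin n → E`, where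
`K(x,y) = ⟪Φ x, Φ y⟫`. -/
def gramM {E H : Type*} [NormedAddCommGroup H] [InnerProductSpace ℝ H]
    (Φ : E → H) {n : ℕ} (x : Fin n → E) : Matrix (Fin n) (Fin n) ℝ :=
  Matrix.of fun i j => (inner ℝ (Φ (x i)) (Φ (x j)) : ℝ)

/-- The vector `v(y) = (K(x_1,y), …, K(x_n,y))`. -/
def kvec {E H : Type*} [NormedAddCommGroup H] [InnerProductSpace ℝ H]
    (Φ : E → H) {n : ℕ} (x : Fin n → E) (y : E) : Fin n → ℝ :=
  fun i => (inner ℝ (Φ (x i)) (Φ y) : ℝ)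

/-- `S_t(y) = K(y,y) − v(y)ᵀ G⁻¹ v(y)`; for `t = 0` this is `S_0(y) = K(y,y)`. -/
def Sfun {E H : Type*} [NormedAddCommGroup H] [InnerProductSpace ℝ H]
    (Φ : E → H) {n : ℕ} (x : Fin n → E) (y : E) : ℝ :=
  (inner ℝ (Φ y) (Φ y) : ℝ) -
    dotProduct (kvec Φ x y) (Matrix.mulVec (gramM Φ x)⁻¹ (kvec Φ x y))

/-- `S_t(z)` equals the squared distance from `Φ z` to the candidate projection
`∑ i, (G⁻¹ v(z))_i • Φ (x i)` onto the span of the `Φ (x i)`. -/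
lemma Sfun_eq_norm_sq {E H : Type*} [NormedAddCommGroup H] [InnerProductSpace ℝ H]
    (Φ : E → H) {n : ℕ} (x : Fin n → E) (hG : IsUnit (gramM Φ x).det) (z : E) :
    Sfun Φ x z =
      ‖Φ z - ∑ i, Matrix.mulVec (gramM Φ x)⁻¹ (kvec Φ x z) i • Φ (x i)‖ ^ 2 := by
  set G := gramM Φ x with hGdef
  set v := kvec Φ x z with hvdef
  set c := Matrix.mulVec G⁻¹ v with hcdef
  have hcv : dotProduct c v = dotProduct v (Matrix.mulVec G⁻¹ v) := by
    rw [hcdef, dotProduct_comm]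
  have hinner : (inner ℝ (Φ z) (∑ i, c i • Φ (x i)) : ℝ) = dotProduct c v := by
    rw [inner_sum]
    simp only [real_inner_smul_right, dotProduct, hvdef, kvec]
    exact Finset.sum_congr rfl fun i _ => by rw [real_inner_comm]
  have hw2 : ‖∑ i, c i • Φ (x i)‖ ^ 2 = dotProduct c v := by
    have h1 : (inner ℝ (∑ i, c i • Φ (x i)) (∑ j, c j • Φ (x j)) : ℝ)
        = dotProduct c (Matrix.mulVec G c) := by
      rw [sum_inner]
      simp only [inner_sum, real_inner_smul_left, real_inner_smul_right]
      simp only [dotProduct, Matrix.mulVec, hGdef, gramM, Finset.mul_sum,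
        Matrix.of_apply, Finset.sum_mul]
      rw [Finset.sum_comm]
      exact Finset.sum_congr rfl fun i _ =>
        Finset.sum_congr rfl fun j _ => by rw [real_inner_comm (Φ (x j)) (Φ (x i))]; ring
    have hGc : Matrix.mulVec G c = v := by
      rw [hcdef, Matrix.mulVec_mulVec, Matrix.mul_nonsing_inv _ hG, Matrix.one_mulVec]
    rw [← real_inner_self_eq_norm_sq, h1, hGc]
  rw [Sfun, norm_sub_sq_real, hinner, hw2, ← real_inner_self_eq_norm_sq, ← hcv]
  ring

/-- if `Ω₁ ⊆ Ω` is an `ε`-net of `(Ω, ϱ)` (every point of `Ω` is within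
`ϱ`-distance `ε` of `Ω₁`), then for every `t ≥ 0` and all `x_1,…,x_t ∈ Ω` with invertible
Gram matrix (no condition when `t = 0`),
`sup_{z ∈ Ω₁} √(S_t(z)) ≥ w_K(t) − ε`. -/
theorem net_sup_sqrt_S_ge {d : ℕ} {H : Type*}
    [NormedAddCommGroup H] [InnerProductSpace ℝ H]
    (Ω : Set (EuclideanSpace ℝ (Fin d))) (hΩ : IsCompact Ω) (hne : Ω.Nonempty)
    (Φ : EuclideanSpace ℝ (Fin d) → H) (hΦ : ContinuousOn Φ Ω)
    (ε : ℝ) (Ω₁ : Set (EuclideanSpace ℝ (Fin d))) (hsub : Ω₁ ⊆ Ω)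
    (hnet : ∀ x ∈ Ω, ∃ z ∈ Ω₁, ‖Φ x - Φ z‖ ≤ ε) :
    ∀ (t : ℕ) (x : Fin t → EuclideanSpace ℝ (Fin d)),
      (∀ i, x i ∈ Ω) → IsUnit (gramM Φ x).det →
      kolmWidth Ω Φ t - ε ≤ ⨆ z : Ω₁, Real.sqrt (Sfun Φ x (z : EuclideanSpace ℝ (Fin d))) := by
  intro t x hxΩ hG
  classical
  have : Nonempty ↥Ω := hne.to_subtype
  obtain ⟨C₀, hC₀⟩ := hΩ.exists_bound_of_continuousOn hΦ
  set C := max C₀ 0 with hC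
  have hCnn : (0 : ℝ) ≤ C := le_max_right _ _
  have hCb : ∀ y ∈ Ω, ‖Φ y‖ ≤ C := fun y hy => (hC₀ y hy).trans (le_max_left _ _)
  set Gi := (gramM Φ x)⁻¹ with hGi
  set w : EuclideanSpace ℝ (Fin d) → H :=
    fun z => ∑ i, Matrix.mulVec Gi (kvec Φ x z) i • Φ (x i) with hw
  have hsqrt : ∀ z, Real.sqrt (Sfun Φ x z) = ‖Φ z - w z‖ := fun z => by
    rw [Sfun_eq_norm_sq Φ x hG z, Real.sqrt_sq (norm_nonneg _)]
  set M := ∑ i, ∑ j, |Gi i j| with hM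
  -- uniform bound on the values √(S t z) over Ω
  have hbnd : ∀ z ∈ Ω, ‖Φ z - w z‖ ≤ C + M * C ^ 3 := by
    intro z hz
    have hv : ∀ j, |kvec Φ x z j| ≤ C ^ 2 := fun j => by
      calc |kvec Φ x z j| ≤ ‖Φ (x j)‖ * ‖Φ z‖ := abs_real_inner_le_norm (Φ (x j)) (Φ z)
        _ ≤ C * C := mul_le_mul (hCb _ (hxΩ j)) (hCb _ hz) (norm_nonneg _) hCnn
        _ = C ^ 2 := (sq C).symm
    have hwz : ‖w z‖ ≤ M * C ^ 3 := by
      calc ‖w z‖ ≤ ∑ i, ‖Matrix.mulVec Gi (kvec Φ x z) i • Φ (x i)‖ := norm_sum_le _ _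
        _ ≤ ∑ i, (∑ j, |Gi i j| * C ^ 2) * C := by
            refine Finset.sum_le_sum fun i _ => ?_
            rw [norm_smul]
            refine mul_le_mul ?_ (hCb _ (hxΩ i)) (norm_nonneg _) ?_
            · calc ‖Matrix.mulVec Gi (kvec Φ x z) i‖
                  = |∑ j, Gi i j * kvec Φ x z j| := rfl
                _ ≤ ∑ j, |Gi i j * kvec Φ x z j| := Finset.abs_sum_le_sum_abs _ _
                _ ≤ ∑ j, |Gi i j| * C ^ 2 := by
                    refine Finset.sum_le_sum fun j _ => ?_
                    rw [abs_mul]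
                    exact mul_le_mul_of_nonneg_left (hv j) (abs_nonneg _)
            · positivity
        _ = M * C ^ 3 := by
            simp only [← Finset.sum_mul, ← hM]
            ring
    calc ‖Φ z - w z‖ ≤ ‖Φ z‖ + ‖w z‖ := norm_sub_le _ _
      _ ≤ C + M * C ^ 3 := add_le_add (hCb _ hz) hwz
  have hbdd : BddAbove (Set.range fun z : Ω₁ => Real.sqrt (Sfun Φ x (z : EuclideanSpace ℝ (Fin d)))) := by
    refine ⟨C + M * C ^ 3, ?_⟩
    rintro r ⟨z, rfl⟩
    show Real.sqrt (Sfun Φ x (z : EuclideanSpace ℝ (Fin d))) ≤ _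
    rw [hsqrt]
    exact hbnd _ (hsub z.2)
  -- the subspace spanned by the Φ (x i)
  set L : Submodule ℝ H := Submodule.span ℝ (Set.range fun i => Φ (x i)) with hL
  have hwmem : ∀ z, w z ∈ L := fun z => Submodule.sum_mem _ fun i _ =>
    Submodule.smul_mem _ _ (Submodule.subset_span ⟨i, rfl⟩)
  have hLfin : ∃ s : Finset H, s.card ≤ t ∧ L = Submodule.span ℝ (s : Set H) := by
    refine ⟨Finset.image (fun i => Φ (x i)) Finset.univ, ?_, ?_⟩
    · exact Finset.card_image_le.trans (by simp)
    · rw [hL]; congr 1; simp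
  have hz_le : ∀ z ∈ Ω₁,
      Metric.infDist (Φ z) (L : Set H) ≤ Real.sqrt (Sfun Φ x z) := fun z hz => by
    rw [hsqrt]
    calc Metric.infDist (Φ z) (L : Set H) ≤ dist (Φ z) (w z) :=
          Metric.infDist_le_dist_of_mem (hwmem z)
      _ = ‖Φ z - w z‖ := dist_eq_norm _ _
  have h1 : kolmWidth Ω Φ t ≤ ⨆ y : Ω, Metric.infDist (Φ (y : EuclideanSpace ℝ (Fin d))) (L : Set H) := by
    have hb : BddBelow (Set.range fun L' :
        {L : Submodule ℝ H // ∃ s : Finset H, s.card ≤ t ∧ L = Submodule.span ℝ (s : Set H)} =>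
        ⨆ y : Ω, Metric.infDist (Φ (y : EuclideanSpace ℝ (Fin d))) (L'.1 : Set H)) := by
      refine ⟨0, ?_⟩
      rintro r ⟨L', rfl⟩
      exact Real.iSup_nonneg fun y => Metric.infDist_nonneg
    exact ciInf_le hb ⟨L, hLfin⟩
  have h2 : (⨆ y : Ω, Metric.infDist (Φ (y : EuclideanSpace ℝ (Fin d))) (L : Set H)) ≤
      (⨆ z : Ω₁, Real.sqrt (Sfun Φ x (z : EuclideanSpace ℝ (Fin d)))) + ε := by
    refine ciSup_le fun y => ?_
    obtain ⟨z, hz1, hz2⟩ := hnet y y.2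
    calc Metric.infDist (Φ (y : EuclideanSpace ℝ (Fin d))) (L : Set H)
        ≤ Metric.infDist (Φ z) (L : Set H) + dist (Φ (y : EuclideanSpace ℝ (Fin d))) (Φ z) :=
          Metric.infDist_le_infDist_add_dist
      _ ≤ Real.sqrt (Sfun Φ x z) + ε :=
          add_le_add (hz_le z hz1) (by rw [dist_eq_norm]; exact hz2)
      _ ≤ (⨆ z : Ω₁, Real.sqrt (Sfun Φ x (z : EuclideanSpace ℝ (Fin d)))) + ε :=
          add_le_add (le_ciSup hbdd ⟨z, hz1⟩) le_rfl
  linarith [h1.trans h2]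

end
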